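/- arXiv:2012.13771 — 3 statements merged into one kernel-verified Lean document; each statement's English description precedes it below -/
import Mathlib

section
/- Let 0 ≤ α < 1, (αⱼ)ⱼ≥0 with 0 ≤ αⱼ ≤ α, and (aⱼ)ⱼ≥0 nonnegative with ∑ⱼ αⱼ aⱼ < ∞. If (νₖ) satisfies ν_{k+1} ≤ αₖ νₖ + (αₖ + αₖ²) aₖ for all k ≥ 0 and ν₀ ≤ 0, then ∑_{k=1}^∞ max(νₖ, 0) ≤ (1+α)/(1−α) · ∑_{j=0}^∞ αⱼ aⱼ. -/
/-- Summability estimate (3.11+2): under the recursion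
`ν_{k+1} ≤ αₖ νₖ + (αₖ + αₖ²) aₖ`, with `0 ≤ αₖ ≤ α < 1`, `aₖ ≥ 0`,
`∑ αⱼ aⱼ < ∞` and `ν₀ ≤ 0`, the positive parts of `ν` satisfy
`∑_{k=1}^∞ max(νₖ, 0) ≤ (1+α)/(1−α) ∑_{j=0}^∞ αⱼ aⱼ`. -/
theorem stmt_5 (ν αs a : ℕ → ℝ) (α : ℝ) (hα0 : 0 ≤ α) (hα : α < 1)
    (hαs : ∀ k, 0 ≤ αs k ∧ αs k ≤ α) (ha : ∀ k, 0 ≤ a k)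
    (hsum : Summable (fun j => αs j * a j))
    (hrec : ∀ k, ν (k + 1) ≤ αs k * ν k + (αs k + (αs k) ^ 2) * a k)
    (hν0 : ν 0 ≤ 0) :
    ∑' k : ℕ, max (ν (k + 1)) 0 ≤ (1 + α) / (1 - α) * ∑' j : ℕ, αs j * a j := by
  set p : ℕ → ℝ := fun k => max (ν k) 0 with hp
  set S : ℝ := ∑' j : ℕ, αs j * a j with hS
  have hαa_nonneg : ∀ j, 0 ≤ αs j * a j := fun j => mul_nonneg (hαs j).1 (ha j)
  have hS0 : 0 ≤ S := tsum_nonneg hαa_nonneg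
  have hp0 : p 0 = 0 := max_eq_right hν0
  have hpnn : ∀ k, 0 ≤ p k := fun k => le_max_right _ _
  -- key step bound
  have hstep : ∀ k, p (k + 1) ≤ α * p k + (1 + α) * (αs k * a k) := by
    intro k
    have h1 : ν (k + 1) ≤ α * p k + (1 + α) * (αs k * a k) := by
      have := hrec k
      have hb : αs k * ν k ≤ α * p k := by
        calc αs k * ν k ≤ αs k * p k := by
              exact mul_le_mul_of_nonneg_left (le_max_left _ _) (hαs k).1
          _ ≤ α * p k := mul_le_mul_of_nonneg_right (hαs k).2 (hpnn k)
      have hc : (αs k + (αs k) ^ 2) * a k ≤ (1 + α) * (αs k * a k) := by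
        have h2 : (αs k + (αs k)^2) * a k = (1 + αs k) * (αs k * a k) := by ring
        rw [h2]
        apply mul_le_mul_of_nonneg_right _ (hαa_nonneg k)
        linarith [(hαs k).2]
      linarith
    have h2 : (0:ℝ) ≤ α * p k + (1 + α) * (αs k * a k) := by
      have := mul_nonneg hα0 (hpnn k)
      have := mul_nonneg (by linarith : (0:ℝ) ≤ 1 + α) (hαa_nonneg k)
      linarith
    exact max_le h1 h2
  -- partial sums of αa bounded by S
  have hA : ∀ N, ∑ k ∈ Finset.range N, αs k * a k ≤ S :=
    fun N => Summable.sum_le_tsum _ (fun i _ => hαa_nonneg i) hsum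
  -- shift inequality
  have hshift : ∀ N, ∑ k ∈ Finset.range N, p k ≤ ∑ k ∈ Finset.range N, p (k + 1) := by
    intro N
    cases N with
    | zero => simp
    | succ n =>
      have h := Finset.sum_range_succ' p (n) -- maybe wrong name; fix below
      rw [Finset.sum_range_succ' p n, hp0, add_zero]
      exact Finset.sum_le_sum_of_subset_of_nonneg
        (Finset.range_subset_range.mpr (Nat.le_succ n)) (fun i _ _ => hpnn (i+1))
  -- main partial-sum bound
  have hmain : ∀ N, ∑ k ∈ Finset.range N, p (k + 1) ≤ (1 + α) / (1 - α) * S := by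
    intro N
    set T := ∑ k ∈ Finset.range N, p (k + 1) with hT
    have h1 : T ≤ α * (∑ k ∈ Finset.range N, p k) + (1 + α) * (∑ k ∈ Finset.range N, αs k * a k) := by
      rw [Finset.mul_sum, Finset.mul_sum, ← Finset.sum_add_distrib]
      exact Finset.sum_le_sum (fun k _ => hstep k)
    have h2 : α * (∑ k ∈ Finset.range N, p k) ≤ α * T :=
      mul_le_mul_of_nonneg_left (hshift N) hα0
    have h3 : (1 + α) * (∑ k ∈ Finset.range N, αs k * a k) ≤ (1 + α) * S :=
      mul_le_mul_of_nonneg_left (hA N) (by linarith)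
    have h4 : (1 - α) * T ≤ (1 + α) * S := by linarith
    rw [div_mul_eq_mul_div, le_div_iff₀ (by linarith : (0:ℝ) < 1 - α)]
    linarith
  have hsumm : Summable (fun k => p (k + 1)) :=
    summable_of_sum_range_le (fun k => hpnn (k+1)) hmain
  exact Summable.tsum_le_of_sum_range_le hsumm hmain
end

section
/- Let 0 ≤ αₖ ≤ α_{k+1} ≤ α < 1/3 for all k ≥ 0, and let (bₖ)ₖ≥0 be nonnegative reals and (aₖ)ₖ≥1 nonnegative reals (with a₀ = 0) satisfying, for all k ≥ 0, b_{k+1} − (1+αₖ) bₖ + αₖ b_{k−1} ≤ −(1−αₖ) a_{k+1} + 2 αₖ aₖ (with b_{−1} := b₀). Define μₖ = bₖ − αₖ b_{k−1} + 2 αₖ aₖ. Then (μₖ) is nonincreasing, bₖ ≤ b₀/(1−α) for all k, and ∑_{k=0}^∞ a_{k+1} ≤ b₀ / ((1−3α)(1−α)). -/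
/-- Abstract sequence lemma for Proposition 3.2: with monotone step sizes
`0 ≤ αₖ ≤ α_{k+1} ≤ α < 1/3`, nonnegative `bₖ`, `aₖ` (`a₀ = 0`, `b₋₁ := b₀`)
satisfying `b_{k+1} − (1+αₖ)bₖ + αₖ b_{k−1} ≤ −(1−αₖ)a_{k+1} + 2αₖ aₖ`,
the sequence `μₖ = bₖ − αₖ b_{k−1} + 2αₖ aₖ` is nonincreasing,
`bₖ ≤ b₀/(1−α)` for all `k`, and `∑_{k=0}^∞ a_{k+1} ≤ b₀/((1−3α)(1−α))`. -/
theorem stmt_8 (α : ℝ) (hα : α < 1 / 3) (αs b a μ : ℕ → ℝ)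
    (hαs0 : ∀ k, 0 ≤ αs k) (hαsmono : ∀ k, αs k ≤ αs (k + 1))
    (hαsb : ∀ k, αs k ≤ α)
    (hb : ∀ k, 0 ≤ b k) (ha : ∀ k, 0 ≤ a k) (ha0 : a 0 = 0)
    (hrec : ∀ k, b (k + 1) - (1 + αs k) * b k + αs k * b (k - 1) ≤
      -(1 - αs k) * a (k + 1) + 2 * αs k * a k)
    (hμ : ∀ k, μ k = b k - αs k * b (k - 1) + 2 * αs k * a k) :
    (∀ k, μ (k + 1) ≤ μ k) ∧ (∀ k, b k ≤ b 0 / (1 - α)) ∧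
      (∑' k : ℕ, a (k + 1) ≤ b 0 / ((1 - 3 * α) * (1 - α))) := by
  have hα0 : 0 ≤ α := le_trans (hαs0 0) (hαsb 0)
  have h13 : 0 < 1 - 3 * α := by linarith
  have h1α : 0 < 1 - α := by linarith
  -- key step inequality
  have hstep : ∀ k, μ (k + 1) + (1 - 3 * α) * a (k + 1) ≤ μ k := by
    intro k
    have h := hrec k
    have e1 := hμ (k + 1)
    have e2 := hμ k
    simp only [Nat.add_sub_cancel] at e1
    have p1 : 0 ≤ (αs (k + 1) - αs k) * b k :=
      mul_nonneg (by linarith [hαsmono k]) (hb k)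
    have p2 : 0 ≤ (3 * α - αs k - 2 * αs (k + 1)) * a (k + 1) :=
      mul_nonneg (by linarith [hαsb k, hαsb (k + 1)]) (ha (k + 1))
    nlinarith [p1, p2]
  have hμmono : ∀ k, μ (k + 1) ≤ μ k := by
    intro k
    have := hstep k
    have : 0 ≤ (1 - 3 * α) * a (k + 1) := mul_nonneg (le_of_lt h13) (ha (k + 1))
    linarith [hstep k]
  have hμ0 : μ 0 ≤ b 0 := by
    have := hμ 0
    simp only [Nat.zero_sub, ha0] at this
    nlinarith [mul_nonneg (hαs0 0) (hb 0)]
  have hμle : ∀ k, μ k ≤ b 0 := by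
    intro k
    induction k with
    | zero => exact hμ0
    | succ n ih => exact le_trans (hμmono n) ih
  have hcancel : b 0 / (1 - α) * (1 - α) = b 0 := div_mul_cancel₀ _ (ne_of_gt h1α)
  have hbbound : ∀ k, b k ≤ b 0 / (1 - α) := by
    intro k
    induction k with
    | zero => nlinarith [hb 0]
    | succ n ih =>
      have e1 := hμ (n + 1)
      simp only [Nat.add_sub_cancel] at e1
      have h1 := hμle (n + 1)
      have h2 : αs (n + 1) * b n ≤ α * (b 0 / (1 - α)) := by
        have := mul_le_mul (hαsb (n + 1)) ih (hb n) hα0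
        exact this
      nlinarith [mul_nonneg (hαs0 (n + 1)) (ha (n + 1))]
  have hμlb : ∀ k, -(α * (b 0 / (1 - α))) ≤ μ k := by
    intro k
    have e := hμ k
    have h2 : αs k * b (k - 1) ≤ α * (b 0 / (1 - α)) :=
      mul_le_mul (hαsb k) (hbbound (k - 1)) (hb (k - 1)) hα0
    nlinarith [hb k, mul_nonneg (hαs0 k) (ha k)]
  have hpartial : ∀ n, (1 - 3 * α) * ∑ k ∈ Finset.range n, a (k + 1) ≤ μ 0 - μ n := by
    intro n
    induction n with
    | zero => simp
    | succ n ih =>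
      rw [Finset.sum_range_succ]
      have := hstep n
      linarith
  refine ⟨hμmono, hbbound, ?_⟩
  refine Real.tsum_le_of_sum_range_le (fun n => ha (n + 1)) (fun n => ?_)
  have h1 := hpartial n
  have h2 := hμlb n
  rw [le_div_iff₀ (by positivity)]
  nlinarith [hcancel, hμ0]
end

section
/- Let β > 0, Aⱼ ∈ ℝ^{m×nⱼ} and symmetric Hⱼ ∈ ℝ^{nⱼ×nⱼ} for j = 2,…,l. If Hⱼ − β(l−2) AⱼᵀAⱼ is positive semidefinite for each j, then for all vectors uⱼ ∈ ℝ^{nⱼ}: ∑_{j=2}^{l} uⱼᵀ(Hⱼ + β AⱼᵀAⱼ)uⱼ − β ‖∑_{j=2}^{l} Aⱼ uⱼ‖₂² ≥ 0. -/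
open Matrix

lemma dot_half {m : ℕ} (v w : Fin m → ℝ) :
    v ⬝ᵥ w ≤ (v ⬝ᵥ v + w ⬝ᵥ w) / 2 := by
  simp only [dotProduct]
  rw [← Finset.sum_add_distrib, Finset.sum_div]
  apply Finset.sum_le_sum
  intro i _
  nlinarith [sq_nonneg (v i - w i)]

lemma sum_dot {m : ℕ} {ι : Type*} (s : Finset ι) (v : ι → (Fin m → ℝ)) (w : Fin m → ℝ) :
    (∑ j ∈ s, v j) ⬝ᵥ w = ∑ j ∈ s, v j ⬝ᵥ w := by
  simp only [dotProduct, Finset.sum_apply, Finset.sum_mul]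
  rw [Finset.sum_comm]

lemma dot_sum {m : ℕ} {ι : Type*} (s : Finset ι) (w : Fin m → ℝ) (v : ι → (Fin m → ℝ)) :
    w ⬝ᵥ (∑ j ∈ s, v j) = ∑ j ∈ s, w ⬝ᵥ v j := by
  simp only [dotProduct, Finset.sum_apply, Finset.mul_sum]
  rw [Finset.sum_comm]

lemma sum_dot_sq {m : ℕ} {ι : Type*} (s : Finset ι) (v : ι → (Fin m → ℝ)) :
    (∑ j ∈ s, v j) ⬝ᵥ (∑ j ∈ s, v j) ≤ (s.card : ℝ) * ∑ j ∈ s, v j ⬝ᵥ v j := by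
  rw [dot_sum]
  calc ∑ j ∈ s, (∑ i ∈ s, v i) ⬝ᵥ v j
      = ∑ j ∈ s, ∑ i ∈ s, v i ⬝ᵥ v j := by
        exact Finset.sum_congr rfl fun j _ => sum_dot s v (v j)
    _ ≤ ∑ j ∈ s, ∑ i ∈ s, (v i ⬝ᵥ v i + v j ⬝ᵥ v j) / 2 := by
        refine Finset.sum_le_sum fun j _ => Finset.sum_le_sum fun i _ => dot_half _ _
    _ = (s.card : ℝ) * ∑ j ∈ s, v j ⬝ᵥ v j := by
        simp only [← Finset.sum_div, Finset.sum_add_distrib, Finset.sum_const, nsmul_eq_mul]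
        rw [← Finset.mul_sum]
        ring

/-- Positivity condition (3.21) for the block matrix `G₂`: if
`Hⱼ − β(l−2)AⱼᵀAⱼ ⪰ 0` for `j = 2,…,l`, then for all vectors `uⱼ`,
`∑ⱼ uⱼᵀ(Hⱼ + β AⱼᵀAⱼ)uⱼ − β ‖∑ⱼ Aⱼuⱼ‖² ≥ 0`. Here the blocks `2,…,l`
are indexed by `Fin (l − 1)`. -/
theorem stmt_13 {m l : ℕ} (hl : 2 ≤ l) {n : Fin (l - 1) → ℕ} (β : ℝ) (hβ : 0 < β)
    (A : ∀ j : Fin (l - 1), Matrix (Fin m) (Fin (n j)) ℝ)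
    (H : ∀ j : Fin (l - 1), Matrix (Fin (n j)) (Fin (n j)) ℝ)
    (hH : ∀ j, (H j).IsSymm)
    (hpsd : ∀ j, (H j - (β * ((l : ℝ) - 2)) • ((A j)ᵀ * A j)).PosSemidef) :
    ∀ u : (j : Fin (l - 1)) → (Fin (n j) → ℝ),
      0 ≤ ∑ j, u j ⬝ᵥ (H j + β • ((A j)ᵀ * A j)).mulVec (u j)
        - β * ((∑ j, (A j).mulVec (u j)) ⬝ᵥ (∑ j, (A j).mulVec (u j))) := by
  intro u
  set v : Fin (l - 1) → (Fin m → ℝ) := fun j => (A j).mulVec (u j) with hv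
  have hAtA : ∀ j, u j ⬝ᵥ ((A j)ᵀ * A j).mulVec (u j) = v j ⬝ᵥ v j := by
    intro j
    rw [← Matrix.mulVec_mulVec, Matrix.dotProduct_mulVec, Matrix.vecMul_transpose]
  have hcard : ((Fintype.card (Fin (l - 1)) : ℝ)) = (l : ℝ) - 1 := by
    rw [Fintype.card_fin]
    have h1 : (1:ℕ) ≤ l := le_trans one_le_two hl
    push_cast [Nat.cast_sub h1]
    ring
  have key : (∑ j, v j) ⬝ᵥ (∑ j, v j) ≤ ((l:ℝ) - 1) * ∑ j, v j ⬝ᵥ v j := by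
    have := sum_dot_sq (Finset.univ : Finset (Fin (l-1))) v
    rwa [Finset.card_univ, hcard] at this
  have hHj : ∀ j, β * ((l:ℝ) - 2) * (v j ⬝ᵥ v j) ≤ u j ⬝ᵥ (H j).mulVec (u j) := by
    intro j
    have h := (hpsd j).dotProduct_mulVec_nonneg (u j)
    simp only [star_trivial, Matrix.sub_mulVec, dotProduct_sub,
      Matrix.smul_mulVec, dotProduct_smul, hAtA j, smul_eq_mul] at h
    linarith
  have expand : ∑ j, u j ⬝ᵥ (H j + β • ((A j)ᵀ * A j)).mulVec (u j)
      = ∑ j, u j ⬝ᵥ (H j).mulVec (u j) + β * ∑ j, v j ⬝ᵥ v j := by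
    rw [Finset.mul_sum, ← Finset.sum_add_distrib]
    refine Finset.sum_congr rfl fun j _ => ?_
    rw [Matrix.add_mulVec, dotProduct_add, Matrix.smul_mulVec,
      dotProduct_smul, hAtA j, smul_eq_mul]
  have hsumH : β * ((l:ℝ) - 2) * ∑ j, v j ⬝ᵥ v j ≤ ∑ j, u j ⬝ᵥ (H j).mulVec (u j) := by
    rw [Finset.mul_sum]
    exact Finset.sum_le_sum fun j _ => by have := hHj j; linarith
  rw [expand]
  nlinarith [key, hsumH]
end
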